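/- The infinite product ∏_{n=2}^∞ (1 − 1/n²)^n · e^{1/n} converges and its value is e^γ / 2, where γ is the Euler–Mascheroni constant. -/

import Mathlib

open Real Filter Finset

lemma prodform (N : ℕ) : ∏ k ∈ Finset.range N, (1 - 1/((k:ℝ)+2)^2)^(k+2)
    = ((N:ℝ)+2)^(N+1) / (2*((N:ℝ)+1)^(N+2)) := by
  induction N with
  | zero => norm_num
  | succ n ih =>
    rw [Finset.prod_range_succ, ih]
    have h2 : ((n:ℝ)+2) ≠ 0 := by positivity
    have h1 : ((n:ℝ)+1) ≠ 0 := by positivity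
    have h3 : ((n:ℝ)+3) ≠ 0 := by positivity
    have key : (1 - 1/((n:ℝ)+2)^2) = ((n:ℝ)+1)*((n:ℝ)+3)/((n:ℝ)+2)^2 := by
      field_simp; ring
    push_cast
    rw [key, div_pow, mul_pow, ← pow_mul]
    field_simp
    ring

-- positivity of terms
lemma fpos (n : ℕ) : 0 < (1 - 1 / ((n : ℝ) + 2) ^ 2) ^ (n + 2) * Real.exp (1 / ((n : ℝ) + 2)) := by
  have h : (1:ℝ)/((n:ℝ)+2)^2 < 1 := by
    rw [div_lt_one (by positivity)]
    nlinarith [Nat.cast_nonneg (α := ℝ) n]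
  have h2 : (0:ℝ) < 1 - 1/((n:ℝ)+2)^2 := by linarith
  positivity

-- log bound: |log f n| ≤ 2/(n+1)^2
lemma logbound (n : ℕ) :
    |Real.log ((1 - 1 / ((n : ℝ) + 2) ^ 2) ^ (n + 2) * Real.exp (1 / ((n : ℝ) + 2)))|
      ≤ 2 / ((n:ℝ)+1)^2 := by
  set m : ℝ := (n:ℝ)+2 with hm
  have hm2 : (2:ℝ) ≤ m := by rw [hm]; nlinarith [Nat.cast_nonneg (α := ℝ) n]
  have hm0 : 0 < m := by linarith
  set x : ℝ := 1/m^2 with hx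
  have hx0 : 0 < x := by positivity
  have hxq : x ≤ 1/4 := by
    rw [hx, div_le_div_iff₀ (by positivity) (by norm_num)]
    nlinarith
  have h1x : 0 < 1 - x := by linarith
  have hlog : Real.log ((1 - x) ^ (n + 2) * Real.exp (1/m))
      = ((n:ℝ)+2) * Real.log (1-x) + 1/m := by
    rw [Real.log_mul (by positivity) (by positivity), Real.log_pow, Real.log_exp]
    push_cast; ring
  rw [hlog]
  -- upper: log(1-x) ≤ -x
  have hup : Real.log (1-x) ≤ -x := by
    have := Real.log_le_sub_one_of_pos h1x
    linarith
  -- lower: log(1-x) ≥ -x - 2x^2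
  have hlo : -x - 2*x^2 ≤ Real.log (1-x) := by
    have h := Real.log_le_sub_one_of_pos (x := (1-x)⁻¹) (by positivity)
    rw [Real.log_inv] at h
    have hinv : (1-x)⁻¹ - 1 = x/(1-x) := by field_simp; ring
    have hfrac : x/(1-x) ≤ x + 2*x^2 := by
      rw [div_le_iff₀ h1x]
      nlinarith
    nlinarith
  have hmx : ((n:ℝ)+2) * x = 1/m := by
    rw [hx, hm]; field_simp
  have hmn : ((n:ℝ)+2) = m := hm.symm
  rw [abs_le]
  constructor
  · have : -(2*(((n:ℝ)+2) * x^2)) ≤ ((n:ℝ)+2) * Real.log (1-x) + 1/m := by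
      nlinarith [hlo, hm0]
    have hb : ((n:ℝ)+2) * x^2 ≤ 1/((n:ℝ)+1)^2 := by
      rw [hx, hmn, div_pow, one_pow, mul_one_div]
      rw [div_le_div_iff₀ (by positivity) (by positivity)]
      have h1 : ((n:ℝ)+1) ≤ m := by rw [hm]; linarith
      have h0 : (0:ℝ) ≤ (n:ℝ)+1 := by positivity
      calc m * ((n:ℝ)+1)^2 ≤ m * m^2 :=
            mul_le_mul_of_nonneg_left (pow_le_pow_left₀ h0 h1 2) hm0.le
        _ = m^3 := by ring
        _ ≤ m^4 := pow_le_pow_right₀ (by linarith) (by norm_num)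
        _ = 1*(m^2)^2 := by ring
    have h2 : -(2 / ((n:ℝ)+1)^2) ≤ -(2*(((n:ℝ)+2) * x^2)) := by
      rw [neg_le_neg_iff]
      rw [div_eq_mul_one_div]
      nlinarith
    linarith
  · have : ((n:ℝ)+2) * Real.log (1-x) + 1/m ≤ 0 := by
      nlinarith [hup, hm0]
    have : (0:ℝ) ≤ 2/((n:ℝ)+1)^2 := by positivity
    linarith

lemma closedform (N : ℕ) :
    ∏ k ∈ Finset.range N,
      (1 - 1 / ((k : ℝ) + 2) ^ 2) ^ (k + 2) * Real.exp (1 / ((k : ℝ) + 2))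
    = (1/2) * (1 + 1/((N:ℝ)+1))^(N+1) *
        Real.exp ((∑ k ∈ Finset.range (N+1), (1:ℝ)/(k+1)) - Real.log ((N:ℝ)+1) - 1) := by
  rw [Finset.prod_mul_distrib, prodform, ← Real.exp_sum]
  have hshift : (∑ k ∈ Finset.range (N+1), (1:ℝ)/(k+1))
      = (∑ k ∈ Finset.range N, (1:ℝ)/(k+2)) + 1 := by
    rw [Finset.sum_range_succ']
    norm_num
    exact Finset.sum_congr rfl fun x _ => by push_cast; ring_nf
  rw [hshift]
  have h1 : (0:ℝ) < (N:ℝ)+1 := by positivity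
  have hexp : Real.exp ((∑ k ∈ Finset.range N, (1:ℝ)/(k+2)) + 1 - Real.log ((N:ℝ)+1) - 1)
      = Real.exp (∑ k ∈ Finset.range N, (1:ℝ)/(k+2)) / ((N:ℝ)+1) := by
    rw [show (∑ k ∈ Finset.range N, (1:ℝ)/(k+2)) + 1 - Real.log ((N:ℝ)+1) - 1
        = (∑ k ∈ Finset.range N, (1:ℝ)/(k+2)) - Real.log ((N:ℝ)+1) by ring,
      Real.exp_sub, Real.exp_log h1]
  rw [hexp]
  have h2 : (1:ℝ) + 1/((N:ℝ)+1) = ((N:ℝ)+2)/((N:ℝ)+1) := by field_simp; ring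
  rw [h2, div_pow, pow_succ ((N:ℝ)+1) (N+1)]
  have h3 : ((N:ℝ)+1)^(N+1) ≠ 0 := by positivity
  field_simp



/-- the infinite product `∏_{n≥2} (1 − 1/n²)ⁿ · e^{1/n}` converges, and its
value is `e^γ / 2`, where `γ = lim_{N→∞} (∑_{k=1}^N 1/k − log N)` is the Euler–Mascheroni
constant. -/
theorem stmt8 (γ : ℝ)
    (hγ : Filter.Tendsto
      (fun N : ℕ => (∑ k ∈ Finset.range N, (1 : ℝ) / (k + 1)) - Real.log N)
      Filter.atTop (nhds γ)) :
    Multipliable (fun n : ℕ =>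
      (1 - 1 / ((n : ℝ) + 2) ^ 2) ^ (n + 2) * Real.exp (1 / ((n : ℝ) + 2))) ∧
    ∏' n : ℕ, (1 - 1 / ((n : ℝ) + 2) ^ 2) ^ (n + 2) * Real.exp (1 / ((n : ℝ) + 2))
      = Real.exp γ / 2 := by

  set f : ℕ → ℝ := fun n =>
    (1 - 1 / ((n : ℝ) + 2) ^ 2) ^ (n + 2) * Real.exp (1 / ((n : ℝ) + 2)) with hf
  -- summability of logs
  have hsum : Summable (fun n => Real.log (f n)) := by
    have h0 : Summable (fun n : ℕ => 1/((n:ℝ))^2) :=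
      Real.summable_one_div_nat_pow.mpr (by norm_num)
    have h1 : Summable (fun n : ℕ => 1/((n:ℝ)+1)^2) := by
      have := (summable_nat_add_iff 1).mpr h0
      simpa using this
    have h2 : Summable (fun n : ℕ => 2/((n:ℝ)+1)^2) := by
      have := h1.mul_left 2
      simpa [div_eq_mul_inv] using this
    have habs : Summable (fun n => |Real.log (f n)|) :=
      Summable.of_nonneg_of_le (fun n => abs_nonneg _) (fun n => logbound n) h2
    exact habs.of_abs
  -- multipliability
  have hmult : Multipliable f := by
    have hp := hsum.hasSum.rexp
    have : (Real.exp ∘ fun n => Real.log (f n)) = f := by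
      funext n
      exact Real.exp_log (fpos n)
    rw [this] at hp
    exact ⟨_, hp⟩
  refine ⟨hmult, ?_⟩
  -- limit of partial products
  have htend : Filter.Tendsto (fun N => ∏ k ∈ Finset.range N, f k)
      Filter.atTop (nhds (∏' n, f n)) := hmult.hasProd.tendsto_prod_nat
  have hA : Filter.Tendsto (fun N : ℕ => (1 + 1/((N:ℝ)+1))^(N+1))
      Filter.atTop (nhds (Real.exp 1)) := by
    have := (Real.tendsto_one_add_div_pow_exp 1).comp (tendsto_add_atTop_nat 1)
    have heq : ((fun x : ℕ => (1 + 1 / (x : ℝ)) ^ x) ∘ fun n => n + 1)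
        = fun N : ℕ => (1 + 1/((N:ℝ)+1))^(N+1) := by
      funext N; simp [Function.comp]
    rwa [heq] at this
  have hB : Filter.Tendsto
      (fun N : ℕ => Real.exp ((∑ k ∈ Finset.range (N+1), (1:ℝ)/(k+1))
        - Real.log ((N:ℝ)+1) - 1))
      Filter.atTop (nhds (Real.exp (γ - 1))) := by
    have h1 := hγ.comp (tendsto_add_atTop_nat 1)
    have heq : ((fun N : ℕ => (∑ k ∈ Finset.range N, (1:ℝ)/(k+1)) - Real.log N)
        ∘ fun n => n + 1)
        = fun N : ℕ => (∑ k ∈ Finset.range (N+1), (1:ℝ)/(k+1)) - Real.log ((N:ℝ)+1) := by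
      funext N; simp [Function.comp]
    rw [heq] at h1
    exact (Real.continuous_exp.continuousAt.tendsto).comp (h1.sub_const 1)
  have hlim : Filter.Tendsto (fun N => ∏ k ∈ Finset.range N, f k)
      Filter.atTop (nhds (Real.exp γ / 2)) := by
    have := ((hA.const_mul (1/2:ℝ)).mul hB)
    have hval : 1/2 * Real.exp 1 * Real.exp (γ - 1) = Real.exp γ / 2 := by
      have h : (1:ℝ) + (γ - 1) = γ := by ring
      rw [mul_assoc, ← Real.exp_add, h]; ring
    rw [hval] at this
    refine this.congr fun N => ?_
    rw [hf, closedform N]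
  exact tendsto_nhds_unique htend hlim
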